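/- arXiv:2602.09967 — 2 statements merged into one kernel-verified Lean document; each statement's English description precedes it below -/
import Mathlib

section
/- (Proposition: monotonicity of optimal premia.) Suppose the menu's retentions are submodular, i.e. r_θ(l) is nonincreasing in θ for every l ∈ [0,L̄], and the premia satisfy the premium formula (★): p_θ = p_{θ̲} + ∫₀^{L̄} (1 − g_{θ̲}(F_{θ̲}(l))) r_{θ̲}(l) dl − ∫_{θ̲}^{θ} ∫₀^{L̄} D(s,l) r_s(l) dl ds − ∫₀^{L̄} (1 − g_θ(F_θ(l))) r_θ(l) dl for every θ ∈ Θ. Then θ ↦ p_θ is nondecreasing on Θ: for all θ₁ ≤ θ₂ in Θ, p_{θ₁} ≤ p_{θ₂}. -/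
open MeasureTheory Set Filter

private lemma abs_deriv_le_of_lip {C : NNReal} {a b : ℝ} (hab : a < b) {f : ℝ → ℝ}
    (hlip : LipschitzOnWith C f (Set.Icc a b)) {s d : ℝ} (hs : s ∈ Set.Icc a b)
    (hd : HasDerivWithinAt f d (Set.Icc a b) s) : |d| ≤ C := by
  rw [hasDerivWithinAt_iff_tendsto_slope] at hd
  have hne : (nhdsWithin s (Set.Icc a b \ {s})).NeBot := by
    rcases lt_or_eq_of_le hs.2 with h | h
    · have h1 : Set.Ioc s b ⊆ Set.Icc a b \ {s} := fun t ht =>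
        ⟨⟨le_trans hs.1 ht.1.le, ht.2⟩, by simpa using (ne_of_gt ht.1)⟩
      have h2 : s ∈ closure (Set.Ioc s b) := by
        rw [closure_Ioc h.ne]; exact ⟨le_refl s, h.le⟩
      exact (mem_closure_iff_nhdsWithin_neBot.1 h2).mono (nhdsWithin_mono s h1)
    · subst h
      have h1 : Set.Ico a s ⊆ Set.Icc a s \ {s} := fun t ht =>
        ⟨⟨ht.1, ht.2.le⟩, by simpa using ne_of_lt ht.2⟩
      have h2 : s ∈ closure (Set.Ico a s) := by
        rw [closure_Ico hab.ne]; exact ⟨hab.le, le_refl s⟩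
      exact (mem_closure_iff_nhdsWithin_neBot.1 h2).mono (nhdsWithin_mono s h1)
  have habs : Filter.Tendsto (fun t => |slope f s t|) (nhdsWithin s (Set.Icc a b \ {s})) (nhds |d|) :=
    hd.abs
  refine le_of_tendsto habs ?_
  refine eventually_nhdsWithin_of_forall ?_
  intro t ht
  have hts : t ≠ s := by simpa using ht.2
  have hpos : (0:ℝ) < |t - s| := abs_pos.2 (sub_ne_zero.2 hts)
  rw [slope_def_field, abs_div, div_le_iff₀ hpos]
  have := hlip.dist_le_mul t ht.1 s hs
  simpa [Real.dist_eq] using this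

private lemma integrableOn_of_bound {f : ℝ → ℝ} {a b M : ℝ}
    (hf : AEStronglyMeasurable f (volume.restrict (Set.Ioc a b)))
    (hM : ∀ x ∈ Set.Ioc a b, |f x| ≤ M) :
    IntegrableOn f (Set.Ioc a b) := by
  refine Integrable.mono' (g := fun _ => M)
    (integrableOn_const measure_Ioc_lt_top.ne) hf ?_
  filter_upwards [ae_restrict_mem measurableSet_Ioc] with x hx
  simpa using hM x hx
/-- **Monotonicity of optimal premia.** With submodular retentions and premia given by the
envelope formula (★) (and `D ≤ 0`), the premium `θ ↦ p_θ` is nondecreasing on `Θ`. -/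
theorem premia_monotone_of_submodular
    (θlow θhigh Lbar : ℝ) (hθ : θlow < θhigh) (hL : 0 < Lbar)
    (g : ℝ → ℝ → ℝ) (F : ℝ → ℝ → ℝ)
    (hg_mono : ∀ θ ∈ Set.Icc θlow θhigh, MonotoneOn (g θ) (Set.Icc (0 : ℝ) 1))
    (hg0 : ∀ θ ∈ Set.Icc θlow θhigh, g θ 0 = 0)
    (hg1 : ∀ θ ∈ Set.Icc θlow θhigh, g θ 1 = 1)
    (hg_range : ∀ θ ∈ Set.Icc θlow θhigh, ∀ t ∈ Set.Icc (0 : ℝ) 1,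
      g θ t ∈ Set.Icc (0 : ℝ) 1)
    (hF_range : ∀ θ ∈ Set.Icc θlow θhigh, ∀ l ∈ Set.Icc (0 : ℝ) Lbar,
      F θ l ∈ Set.Icc (0 : ℝ) 1)
    (hgF_meas : Measurable fun x : ℝ × ℝ => g x.1 (F x.1 x.2))
    (r : ℝ → ℝ → ℝ) (p : ℝ → ℝ)
    (hr_meas : Measurable (Function.uncurry r)) (hp_meas : Measurable p)
    (hr_range : ∀ θ ∈ Set.Icc θlow θhigh, ∀ l ∈ Set.Icc (0 : ℝ) Lbar,
      r θ l ∈ Set.Icc (0 : ℝ) 1)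
    (D : ℝ → ℝ → ℝ)
    (hD : ∀ l ∈ Set.Icc (0 : ℝ) Lbar, ∀ s ∈ Set.Icc θlow θhigh,
      HasDerivWithinAt (fun t => g t (F t l)) (D s l) (Set.Icc θlow θhigh) s)
    (hLip : ∃ C : NNReal, ∀ l ∈ Set.Icc (0 : ℝ) Lbar,
      LipschitzOnWith C (fun s => g s (F s l)) (Set.Icc θlow θhigh))
    (hD_meas : Measurable (Function.uncurry D))
    (hD_nonpos : ∀ s ∈ Set.Icc θlow θhigh, ∀ l ∈ Set.Icc (0 : ℝ) Lbar, D s l ≤ 0)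
    -- submodularity: `r_θ(l)` is nonincreasing in `θ` for every `l`
    (hsub : ∀ l ∈ Set.Icc (0 : ℝ) Lbar, ∀ θ₁ ∈ Set.Icc θlow θhigh,
      ∀ θ₂ ∈ Set.Icc θlow θhigh, θ₁ ≤ θ₂ → r θ₂ l ≤ r θ₁ l)
    -- the premium formula (★)
    (hstar : ∀ θ ∈ Set.Icc θlow θhigh,
      p θ = p θlow + (∫ l in (0 : ℝ)..Lbar, (1 - g θlow (F θlow l)) * r θlow l)
        - (∫ s in θlow..θ, ∫ l in (0 : ℝ)..Lbar, D s l * r s l)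
        - ∫ l in (0 : ℝ)..Lbar, (1 - g θ (F θ l)) * r θ l) :
    ∀ θ₁ ∈ Set.Icc θlow θhigh, ∀ θ₂ ∈ Set.Icc θlow θhigh, θ₁ ≤ θ₂ → p θ₁ ≤ p θ₂ := by

  obtain ⟨C, hC⟩ := hLip
  intro θ₁ h1 θ₂ h2 h12
  have h0L : (0:ℝ) ≤ Lbar := hL.le
  have hlowmem : θlow ∈ Set.Icc θlow θhigh := ⟨le_refl _, hθ.le⟩
  -- bound on D
  have hDabs : ∀ s ∈ Set.Icc θlow θhigh, ∀ l ∈ Set.Icc (0:ℝ) Lbar, |D s l| ≤ C :=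
    fun s hs l hl => abs_deriv_le_of_lip hθ (hC l hl) hs (hD l hl s hs)
  -- bounds on r and 1 - g∘F
  have hrabs : ∀ θ ∈ Set.Icc θlow θhigh, ∀ l ∈ Set.Icc (0:ℝ) Lbar, |r θ l| ≤ 1 := by
    intro θ hθ' l hl
    have h := hr_range θ hθ' l hl
    rw [abs_le]; exact ⟨by linarith [h.1], h.2⟩
  have hgFmem : ∀ θ ∈ Set.Icc θlow θhigh, ∀ l ∈ Set.Icc (0:ℝ) Lbar,
      g θ (F θ l) ∈ Set.Icc (0:ℝ) 1 :=
    fun θ hθ' l hl => hg_range θ hθ' _ (hF_range θ hθ' l hl)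
  -- measurability of slices
  have measDl : ∀ l : ℝ, Measurable fun s => D s l :=
    fun l => hD_meas.comp (measurable_id.prodMk measurable_const)
  have measDs : ∀ s : ℝ, Measurable fun l => D s l :=
    fun s => hD_meas.comp (measurable_const.prodMk measurable_id)
  have measrs : ∀ s : ℝ, Measurable fun l => r s l :=
    fun s => hr_meas.comp (measurable_const.prodMk measurable_id)
  have measgFs : ∀ s : ℝ, Measurable fun l => g s (F s l) :=
    fun s => hgF_meas.comp (measurable_const.prodMk measurable_id)
  -- FTC in θ
  have hFTC : ∀ l ∈ Set.Icc (0:ℝ) Lbar, ∀ a ∈ Set.Icc θlow θhigh, ∀ b ∈ Set.Icc θlow θhigh,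
      a ≤ b → ∫ s in a..b, D s l = g b (F b l) - g a (F a l) := by
    intro l hl a ha b hb hab
    refine intervalIntegral.integral_eq_sub_of_hasDeriv_right_of_le (f := fun t => g t (F t l)) hab ?_ ?_ ?_
    · exact ((hC l hl).continuousOn).mono (Set.Icc_subset_Icc ha.1 hb.2)
    · intro x hx
      have hx1 : θlow < x := lt_of_le_of_lt ha.1 hx.1
      have hx2 : x < θhigh := lt_of_lt_of_le hx.2 hb.2
      have hmem : Set.Icc θlow θhigh ∈ nhds x := Icc_mem_nhds hx1 hx2
      exact ((hD l hl x ⟨hx1.le, hx2.le⟩).hasDerivAt hmem).hasDerivWithinAt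
    · rw [intervalIntegrable_iff_integrableOn_Ioc_of_le hab]
      refine integrableOn_of_bound (M := (C:ℝ)) ((measDl l).aestronglyMeasurable) ?_
      intro x hx
      exact hDabs x ⟨le_trans ha.1 hx.1.le, le_trans hx.2 hb.2⟩ l hl
  -- integrability of the inner l-integrands
  have hDrint : ∀ s ∈ Set.Icc θlow θhigh, ∀ θ ∈ Set.Icc θlow θhigh,
      IntegrableOn (fun l => D s l * r θ l) (Set.Ioc 0 Lbar) := by
    intro s hs θ hθ'
    refine integrableOn_of_bound (M := (C:ℝ)) (((measDs s).mul (measrs θ)).aestronglyMeasurable) ?_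
    intro l hl
    have hl' : l ∈ Set.Icc (0:ℝ) Lbar := Set.Ioc_subset_Icc_self hl
    calc |D s l * r θ l| = |D s l| * |r θ l| := abs_mul _ _
    _ ≤ C * 1 := mul_le_mul (hDabs s hs l hl') (hrabs θ hθ' l hl') (abs_nonneg _)
        C.coe_nonneg
    _ = C := mul_one _
  have hGint : ∀ θ ∈ Set.Icc θlow θhigh,
      IntegrableOn (fun l => (1 - g θ (F θ l)) * r θ l) (Set.Ioc 0 Lbar) := by
    intro θ hθ'
    refine integrableOn_of_bound (M := (1:ℝ))
      (((measurable_const.sub (measgFs θ)).mul (measrs θ)).aestronglyMeasurable) ?_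
    intro l hl
    have hl' : l ∈ Set.Icc (0:ℝ) Lbar := Set.Ioc_subset_Icc_self hl
    have h1 := hgFmem θ hθ' l hl'
    calc |(1 - g θ (F θ l)) * r θ l| = |1 - g θ (F θ l)| * |r θ l| := abs_mul _ _
    _ ≤ 1 * 1 := mul_le_mul (by rw [abs_le]; exact ⟨by linarith [h1.2], by linarith [h1.1]⟩)
        (hrabs θ hθ' l hl') (abs_nonneg _) zero_le_one
    _ = 1 := mul_one 1
  -- measurability and interval integrability of Φ s = ∫ l in Ioc, D s l * r s l
  have hΦmeas : StronglyMeasurable fun s => ∫ l in Set.Ioc (0:ℝ) Lbar, D s l * r s l := by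
    have : Measurable fun x : ℝ × ℝ => D x.1 x.2 * r x.1 x.2 := hD_meas.mul hr_meas
    exact this.stronglyMeasurable.integral_prod_right'
  have hΨmeas : StronglyMeasurable fun s => ∫ l in Set.Ioc (0:ℝ) Lbar, D s l * r θ₂ l := by
    have : Measurable fun x : ℝ × ℝ => D x.1 x.2 * r θ₂ x.2 :=
      hD_meas.mul (hr_meas.comp (measurable_const.prodMk measurable_snd))
    exact this.stronglyMeasurable.integral_prod_right'
  have hΦbound : ∀ θ ∈ Set.Icc θlow θhigh, ∀ s ∈ Set.Icc θlow θhigh,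
      |∫ l in Set.Ioc (0:ℝ) Lbar, D s l * r θ l| ≤ C * Lbar := by
    intro θ hθ' s hs
    have h := norm_setIntegral_le_of_norm_le_const (μ := volume) (C := (C:ℝ)) (s := Set.Ioc (0:ℝ) Lbar)
      measure_Ioc_lt_top (f := fun l => D s l * r θ l) ?_
    · rw [measureReal_def, Real.volume_Ioc, sub_zero, ENNReal.toReal_ofReal h0L] at h
      simpa using h
    · intro l hl
      have hl' : l ∈ Set.Icc (0:ℝ) Lbar := Set.Ioc_subset_Icc_self hl
      calc ‖D s l * r θ l‖ = |D s l| * |r θ l| := abs_mul _ _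
      _ ≤ C * 1 := mul_le_mul (hDabs s hs l hl') (hrabs θ hθ' l hl') (abs_nonneg _)
          C.coe_nonneg
      _ = C := mul_one _
  have hΦint : ∀ a ∈ Set.Icc θlow θhigh, ∀ b ∈ Set.Icc θlow θhigh, a ≤ b →
      IntervalIntegrable (fun s => ∫ l in Set.Ioc (0:ℝ) Lbar, D s l * r s l) volume a b := by
    intro a ha b hb hab
    rw [intervalIntegrable_iff_integrableOn_Ioc_of_le hab]
    refine integrableOn_of_bound (M := (C:ℝ) * Lbar) hΦmeas.aestronglyMeasurable.restrict ?_
    intro s hs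
    exact hΦbound s ⟨le_trans ha.1 hs.1.le, le_trans hs.2 hb.2⟩ s
      ⟨le_trans ha.1 hs.1.le, le_trans hs.2 hb.2⟩
  have hΨint : IntervalIntegrable (fun s => ∫ l in Set.Ioc (0:ℝ) Lbar, D s l * r θ₂ l)
      volume θ₁ θ₂ := by
    rw [intervalIntegrable_iff_integrableOn_Ioc_of_le h12]
    refine integrableOn_of_bound (M := (C:ℝ) * Lbar) hΨmeas.aestronglyMeasurable.restrict ?_
    intro s hs
    exact hΦbound θ₂ h2 s ⟨le_trans h1.1 hs.1.le, le_trans hs.2 h2.2⟩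
  have hsubIcc : Set.Icc θ₁ θ₂ ⊆ Set.Icc θlow θhigh := Set.Icc_subset_Icc h1.1 h2.2
  -- Step A: compare with the integrand frozen at r θ₂
  have stepA : (∫ s in θ₁..θ₂, ∫ l in Set.Ioc (0:ℝ) Lbar, D s l * r s l)
      ≤ ∫ s in θ₁..θ₂, ∫ l in Set.Ioc (0:ℝ) Lbar, D s l * r θ₂ l := by
    refine intervalIntegral.integral_mono_on h12 (hΦint θ₁ h1 θ₂ h2 h12) hΨint ?_
    intro s hs
    have hs' : s ∈ Set.Icc θlow θhigh := hsubIcc hs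
    refine setIntegral_mono_on (hDrint s hs' s hs') (hDrint s hs' θ₂ h2) measurableSet_Ioc ?_
    intro l hl
    have hl' : l ∈ Set.Icc (0:ℝ) Lbar := Set.Ioc_subset_Icc_self hl
    exact mul_le_mul_of_nonpos_left (hsub l hl' s hs' θ₂ h2 hs.2) (hD_nonpos s hs' l hl')
  -- Fubini for Step B
  have hInt2 : Integrable (Function.uncurry fun s l => D s l * r θ₂ l)
      ((volume.restrict (Set.Ioc θ₁ θ₂)).prod (volume.restrict (Set.Ioc (0:ℝ) Lbar))) := by
    haveI : IsFiniteMeasure (volume.restrict (Set.Ioc θ₁ θ₂)) :=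
      ⟨by rw [Measure.restrict_apply_univ]; exact measure_Ioc_lt_top⟩
    haveI : IsFiniteMeasure (volume.restrict (Set.Ioc (0:ℝ) Lbar)) :=
      ⟨by rw [Measure.restrict_apply_univ]; exact measure_Ioc_lt_top⟩
    refine Integrable.mono' (g := fun _ => (C:ℝ)) (integrable_const _)
      (hD_meas.mul (hr_meas.comp
        (measurable_const.prodMk measurable_snd))).aestronglyMeasurable ?_
    rw [Measure.prod_restrict]
    filter_upwards [ae_restrict_mem (measurableSet_Ioc.prod measurableSet_Ioc)] with x hx
    have hx1 : x.1 ∈ Set.Icc θlow θhigh :=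
      ⟨le_trans h1.1 hx.1.1.le, le_trans hx.1.2 h2.2⟩
    have hx2 : x.2 ∈ Set.Icc (0:ℝ) Lbar := Set.Ioc_subset_Icc_self hx.2
    calc ‖Function.uncurry (fun s l => D s l * r θ₂ l) x‖
        = |D x.1 x.2| * |r θ₂ x.2| := abs_mul _ _
    _ ≤ C * 1 := mul_le_mul (hDabs x.1 hx1 x.2 hx2) (hrabs θ₂ h2 x.2 hx2)
        (abs_nonneg _) C.coe_nonneg
    _ = C := mul_one _
  -- Step B: swap the order of integration and apply FTC in each fiber
  have stepB : (∫ s in θ₁..θ₂, ∫ l in Set.Ioc (0:ℝ) Lbar, D s l * r θ₂ l)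
      = ∫ l in Set.Ioc (0:ℝ) Lbar, (g θ₂ (F θ₂ l) - g θ₁ (F θ₁ l)) * r θ₂ l := by
    rw [intervalIntegral.integral_of_le h12, MeasureTheory.integral_integral_swap hInt2]
    refine setIntegral_congr_fun measurableSet_Ioc ?_
    intro l hl
    have hl' : l ∈ Set.Icc (0:ℝ) Lbar := Set.Ioc_subset_Icc_self hl
    show (∫ x in Set.Ioc θ₁ θ₂, D x l * r θ₂ l) = (g θ₂ (F θ₂ l) - g θ₁ (F θ₁ l)) * r θ₂ l
    rw [integral_mul_const, ← intervalIntegral.integral_of_le h12,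
      hFTC l hl' θ₁ h1 θ₂ h2 h12]
  -- Step C: algebra and positivity
  have hBint : IntegrableOn (fun l => (g θ₂ (F θ₂ l) - g θ₁ (F θ₁ l)) * r θ₂ l)
      (Set.Ioc (0:ℝ) Lbar) := by
    refine integrableOn_of_bound (M := (2:ℝ))
      ((((measgFs θ₂).sub (measgFs θ₁)).mul (measrs θ₂)).aestronglyMeasurable) ?_
    intro l hl
    have hl' : l ∈ Set.Icc (0:ℝ) Lbar := Set.Ioc_subset_Icc_self hl
    have ha2 := hgFmem θ₂ h2 l hl'
    have ha1 := hgFmem θ₁ h1 l hl'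
    calc |(g θ₂ (F θ₂ l) - g θ₁ (F θ₁ l)) * r θ₂ l|
        = |g θ₂ (F θ₂ l) - g θ₁ (F θ₁ l)| * |r θ₂ l| := abs_mul _ _
    _ ≤ 2 * 1 := mul_le_mul (by
          rw [abs_le]
          constructor <;> linarith [ha1.1, ha1.2, ha2.1, ha2.2])
        (hrabs θ₂ h2 l hl') (abs_nonneg _) (by norm_num)
    _ = 2 := mul_one 2
  have stepC : (∫ l in Set.Ioc (0:ℝ) Lbar, (g θ₂ (F θ₂ l) - g θ₁ (F θ₁ l)) * r θ₂ l)
      ≤ (∫ l in Set.Ioc (0:ℝ) Lbar, (1 - g θ₁ (F θ₁ l)) * r θ₁ l)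
        - ∫ l in Set.Ioc (0:ℝ) Lbar, (1 - g θ₂ (F θ₂ l)) * r θ₂ l := by
    have hWint : IntegrableOn (fun l => (1 - g θ₁ (F θ₁ l)) * (r θ₁ l - r θ₂ l))
        (Set.Ioc (0:ℝ) Lbar) := by
      refine integrableOn_of_bound (M := (2:ℝ)) (((measurable_const.sub (measgFs θ₁)).mul
        ((measrs θ₁).sub (measrs θ₂))).aestronglyMeasurable) ?_
      intro l hl
      have hl' : l ∈ Set.Icc (0:ℝ) Lbar := Set.Ioc_subset_Icc_self hl
      have ha1 := hgFmem θ₁ h1 l hl'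
      have hr1 := hr_range θ₁ h1 l hl'
      have hr2 := hr_range θ₂ h2 l hl'
      calc |(1 - g θ₁ (F θ₁ l)) * (r θ₁ l - r θ₂ l)|
          = |1 - g θ₁ (F θ₁ l)| * |r θ₁ l - r θ₂ l| := abs_mul _ _
      _ ≤ 1 * 2 := mul_le_mul (by rw [abs_le]; constructor <;> linarith [ha1.1, ha1.2])
          (by rw [abs_le]; constructor <;> linarith [hr1.1, hr1.2, hr2.1, hr2.2])
          (abs_nonneg _) zero_le_one
      _ = 2 := one_mul 2
    have heq : (∫ l in Set.Ioc (0:ℝ) Lbar, (1 - g θ₁ (F θ₁ l)) * r θ₁ l)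
        = (∫ l in Set.Ioc (0:ℝ) Lbar, (1 - g θ₂ (F θ₂ l)) * r θ₂ l)
          + (∫ l in Set.Ioc (0:ℝ) Lbar, (g θ₂ (F θ₂ l) - g θ₁ (F θ₁ l)) * r θ₂ l)
          + ∫ l in Set.Ioc (0:ℝ) Lbar, (1 - g θ₁ (F θ₁ l)) * (r θ₁ l - r θ₂ l) := by
      have hsum : (∫ l in Set.Ioc (0:ℝ) Lbar, ((1 - g θ₂ (F θ₂ l)) * r θ₂ l
          + (g θ₂ (F θ₂ l) - g θ₁ (F θ₁ l)) * r θ₂ l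
          + (1 - g θ₁ (F θ₁ l)) * (r θ₁ l - r θ₂ l)))
          = (∫ l in Set.Ioc (0:ℝ) Lbar, (1 - g θ₂ (F θ₂ l)) * r θ₂ l)
            + (∫ l in Set.Ioc (0:ℝ) Lbar, (g θ₂ (F θ₂ l) - g θ₁ (F θ₁ l)) * r θ₂ l)
            + ∫ l in Set.Ioc (0:ℝ) Lbar, (1 - g θ₁ (F θ₁ l)) * (r θ₁ l - r θ₂ l) := by
        rw [integral_add (f := fun l => (1 - g θ₂ (F θ₂ l)) * r θ₂ l
            + (g θ₂ (F θ₂ l) - g θ₁ (F θ₁ l)) * r θ₂ l)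
          (g := fun l => (1 - g θ₁ (F θ₁ l)) * (r θ₁ l - r θ₂ l))
          ((hGint θ₂ h2).add hBint) hWint,
          integral_add (f := fun l => (1 - g θ₂ (F θ₂ l)) * r θ₂ l)
          (g := fun l => (g θ₂ (F θ₂ l) - g θ₁ (F θ₁ l)) * r θ₂ l)
          (hGint θ₂ h2) hBint]
      rw [← hsum]
      refine setIntegral_congr_fun measurableSet_Ioc fun l _ => ?_
      show (1 - g θ₁ (F θ₁ l)) * r θ₁ l = (1 - g θ₂ (F θ₂ l)) * r θ₂ l
        + (g θ₂ (F θ₂ l) - g θ₁ (F θ₁ l)) * r θ₂ l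
        + (1 - g θ₁ (F θ₁ l)) * (r θ₁ l - r θ₂ l)
      ring
    have hnn : 0 ≤ ∫ l in Set.Ioc (0:ℝ) Lbar, (1 - g θ₁ (F θ₁ l)) * (r θ₁ l - r θ₂ l) := by
      refine setIntegral_nonneg measurableSet_Ioc ?_
      intro l hl
      have hl' : l ∈ Set.Icc (0:ℝ) Lbar := Set.Ioc_subset_Icc_self hl
      have h1' := hgFmem θ₁ h1 l hl'
      exact mul_nonneg (by linarith [h1'.2])
        (sub_nonneg.2 (hsub l hl' θ₁ h1 θ₂ h2 h12))
    linarith [heq, hnn]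
  have key : (∫ s in θ₁..θ₂, ∫ l in Set.Ioc (0:ℝ) Lbar, D s l * r s l)
      ≤ (∫ l in Set.Ioc (0:ℝ) Lbar, (1 - g θ₁ (F θ₁ l)) * r θ₁ l)
        - ∫ l in Set.Ioc (0:ℝ) Lbar, (1 - g θ₂ (F θ₂ l)) * r θ₂ l :=
    stepA.trans (stepB.le.trans stepC)
  have hsplit := intervalIntegral.integral_add_adjacent_intervals
    (hΦint θlow hlowmem θ₁ h1 h1.1) (hΦint θ₁ h1 θ₂ h2 h12)
  rw [hstar θ₁ h1, hstar θ₂ h2]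
  simp only [intervalIntegral.integral_of_le h0L]
  linarith [hsplit, key]
end

section
/- (Proposition: the agent's optimal utility is nonincreasing in the type.) Suppose the premia satisfy the premium formula (★): p_θ = p_{θ̲} + ∫₀^{L̄} (1 − g_{θ̲}(F_{θ̲}(l))) r_{θ̲}(l) dl − ∫_{θ̲}^{θ} ∫₀^{L̄} D(s,l) r_s(l) dl ds − ∫₀^{L̄} (1 − g_θ(F_θ(l))) r_θ(l) dl for every θ ∈ Θ. Then for every θ ∈ Θ, U_θ(r_θ, p_θ) = U_{θ̲}(r_{θ̲}, p_{θ̲}) + ∫_{θ̲}^{θ} ∫₀^{L̄} D(s,l) r_s(l) dl ds, and consequently θ ↦ U_θ(r_θ, p_θ) is nonincreasing on Θ. -/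
open MeasureTheory

/-- The agent's Yaari dual utility: `U_θ(r, p) = -p - ∫₀^{L̄} (1 - g_θ(F_θ(l))) r(l) dl`. -/
noncomputable def Uag (g F : ℝ → ℝ → ℝ) (Lbar θ : ℝ) (rr : ℝ → ℝ) (pp : ℝ) : ℝ :=
  -pp - ∫ l in (0 : ℝ)..Lbar, (1 - g θ (F θ l)) * rr l

/-- **The agent's optimal utility is nonincreasing in the type.** If the premia satisfy the
envelope formula (★) (and `D ≤ 0`), then
`U_θ(r_θ, p_θ) = U_{θ̲}(r_{θ̲}, p_{θ̲}) + ∫_{θ̲}^{θ} ∫₀^{L̄} D(s,l) r_s(l) dl ds`, and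
consequently `θ ↦ U_θ(r_θ, p_θ)` is nonincreasing on `Θ`. -/
theorem agent_utility_antitone
    (θlow θhigh Lbar : ℝ) (hθ : θlow < θhigh) (hL : 0 < Lbar)
    (g : ℝ → ℝ → ℝ) (F : ℝ → ℝ → ℝ)
    (hg_mono : ∀ θ ∈ Set.Icc θlow θhigh, MonotoneOn (g θ) (Set.Icc (0 : ℝ) 1))
    (hg0 : ∀ θ ∈ Set.Icc θlow θhigh, g θ 0 = 0)
    (hg1 : ∀ θ ∈ Set.Icc θlow θhigh, g θ 1 = 1)
    (hg_range : ∀ θ ∈ Set.Icc θlow θhigh, ∀ t ∈ Set.Icc (0 : ℝ) 1,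
      g θ t ∈ Set.Icc (0 : ℝ) 1)
    (hF_range : ∀ θ ∈ Set.Icc θlow θhigh, ∀ l ∈ Set.Icc (0 : ℝ) Lbar,
      F θ l ∈ Set.Icc (0 : ℝ) 1)
    (hgF_meas : Measurable fun x : ℝ × ℝ => g x.1 (F x.1 x.2))
    (r : ℝ → ℝ → ℝ) (p : ℝ → ℝ)
    (hr_meas : Measurable (Function.uncurry r)) (hp_meas : Measurable p)
    (hr_range : ∀ θ ∈ Set.Icc θlow θhigh, ∀ l ∈ Set.Icc (0 : ℝ) Lbar,
      r θ l ∈ Set.Icc (0 : ℝ) 1)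
    (D : ℝ → ℝ → ℝ)
    (hD : ∀ l ∈ Set.Icc (0 : ℝ) Lbar, ∀ s ∈ Set.Icc θlow θhigh,
      HasDerivWithinAt (fun t => g t (F t l)) (D s l) (Set.Icc θlow θhigh) s)
    (hLip : ∃ C : NNReal, ∀ l ∈ Set.Icc (0 : ℝ) Lbar,
      LipschitzOnWith C (fun s => g s (F s l)) (Set.Icc θlow θhigh))
    (hD_meas : Measurable (Function.uncurry D))
    (hD_nonpos : ∀ s ∈ Set.Icc θlow θhigh, ∀ l ∈ Set.Icc (0 : ℝ) Lbar, D s l ≤ 0)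
    -- the premium formula (★)
    (hstar : ∀ θ ∈ Set.Icc θlow θhigh,
      p θ = p θlow + (∫ l in (0 : ℝ)..Lbar, (1 - g θlow (F θlow l)) * r θlow l)
        - (∫ s in θlow..θ, ∫ l in (0 : ℝ)..Lbar, D s l * r s l)
        - ∫ l in (0 : ℝ)..Lbar, (1 - g θ (F θ l)) * r θ l) :
    (∀ θ ∈ Set.Icc θlow θhigh,
      Uag g F Lbar θ (r θ) (p θ) = Uag g F Lbar θlow (r θlow) (p θlow) +
        ∫ s in θlow..θ, ∫ l in (0 : ℝ)..Lbar, D s l * r s l) ∧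
    ∀ θ₁ ∈ Set.Icc θlow θhigh, ∀ θ₂ ∈ Set.Icc θlow θhigh, θ₁ ≤ θ₂ →
      Uag g F Lbar θ₂ (r θ₂) (p θ₂) ≤ Uag g F Lbar θ₁ (r θ₁) (p θ₁) := by

  obtain ⟨C, hC⟩ := hLip
  set I : ℝ → ℝ := fun s => ∫ l in (0 : ℝ)..Lbar, D s l * r s l with hI
  -- part 1 : the envelope formula
  have key : ∀ θ ∈ Set.Icc θlow θhigh,
      Uag g F Lbar θ (r θ) (p θ) = Uag g F Lbar θlow (r θlow) (p θlow) +
        ∫ s in θlow..θ, ∫ l in (0 : ℝ)..Lbar, D s l * r s l := by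
    intro θ hθmem
    simp only [Uag]
    rw [hstar θ hθmem]
    ring
  refine ⟨key, ?_⟩
  -- measurability of I
  have hI_meas : StronglyMeasurable I := by
    have h1 : StronglyMeasurable (Function.uncurry fun s l => D s l * r s l) := by
      exact (hD_meas.mul hr_meas).stronglyMeasurable
    have h2 := h1.integral_prod_right' (ν := volume.restrict (Set.Ioc (0:ℝ) Lbar))
    have : I = fun s => ∫ l in Set.Ioc (0:ℝ) Lbar, D s l * r s l := by
      funext s
      simp [hI, intervalIntegral.integral_of_le hL.le]
    rw [this]
    exact h2
  -- a.e. bound for I on Icc θlow θhigh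
  have hbound : ∀ s ∈ Set.Ioo θlow θhigh, |I s| ≤ (C : ℝ) * Lbar := by
    intro s hs
    have hsIcc : s ∈ Set.Icc θlow θhigh := Set.Ioo_subset_Icc_self hs
    have hnhds : Set.Icc θlow θhigh ∈ nhds s := Icc_mem_nhds hs.1 hs.2
    have hptwise : ∀ l ∈ Set.uIoc (0:ℝ) Lbar, ‖D s l * r s l‖ ≤ (C : ℝ) := by
      intro l hl
      rw [Set.uIoc_of_le hL.le] at hl
      have hlIcc : l ∈ Set.Icc (0:ℝ) Lbar := ⟨hl.1.le, hl.2⟩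
      have hDer : HasDerivAt (fun t => g t (F t l)) (D s l) s :=
        (hD l hlIcc s hsIcc).hasDerivAt hnhds
      have hDle : ‖D s l‖ ≤ (C : ℝ) := hDer.le_of_lipschitzOn hnhds (hC l hlIcc)
      have hrl := hr_range s hsIcc l hlIcc
      have hrabs : |r s l| ≤ 1 := abs_le.2 ⟨by linarith [hrl.1], hrl.2⟩
      calc ‖D s l * r s l‖ = ‖D s l‖ * |r s l| := by rw [norm_mul]; rfl
        _ ≤ (C : ℝ) * 1 := mul_le_mul hDle hrabs (abs_nonneg _) C.coe_nonneg
        _ = (C : ℝ) := mul_one _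
    have := intervalIntegral.norm_integral_le_of_norm_le_const hptwise
    rw [sub_zero, abs_of_pos hL] at this
    exact this
  -- interval integrability of I between points of Icc
  have hInt : ∀ a ∈ Set.Icc θlow θhigh, ∀ b ∈ Set.Icc θlow θhigh,
      IntervalIntegrable I volume a b := by
    intro a ha b hb
    rw [intervalIntegrable_iff]
    refine Integrable.mono' (g := fun _ => (C : ℝ) * Lbar)
      (integrableOn_const measure_Ioc_lt_top.ne)
      hI_meas.aestronglyMeasurable ?_
    have hmem : ∀ᵐ x ∂(volume.restrict (Set.uIoc a b)), x ∈ Set.uIoc a b :=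
      ae_restrict_mem measurableSet_uIoc
    have hne : ∀ᵐ x ∂(volume.restrict (Set.uIoc a b)),
        x ∉ ({θlow, θhigh} : Set ℝ) :=
      ae_restrict_of_ae (Set.Countable.ae_notMem (Set.toFinite _).countable volume)
    filter_upwards [hmem, hne] with x hx hxne
    have hxIcc : x ∈ Set.Icc θlow θhigh := by
      have h4 : Set.uIcc a b ⊆ Set.Icc θlow θhigh := by
        rw [← Set.uIcc_of_le hθ.le]
        exact Set.uIcc_subset_uIcc (by rw [Set.uIcc_of_le hθ.le]; exact ha)
          (by rw [Set.uIcc_of_le hθ.le]; exact hb)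
      exact h4 (Set.uIoc_subset_uIcc hx)
    have hxIoo : x ∈ Set.Ioo θlow θhigh := by
      rcases hxIcc.1.lt_or_eq with h | h
      · rcases hxIcc.2.lt_or_eq with h' | h'
        · exact ⟨h, h'⟩
        · exact absurd (by simp [h']) hxne
      · exact absurd (by simp [← h]) hxne
    simpa using hbound x hxIoo
  -- part 2
  intro θ₁ h₁ θ₂ h₂ h12
  rw [key θ₁ h₁, key θ₂ h₂]
  have hsub : (∫ s in θlow..θ₂, I s) - (∫ s in θlow..θ₁, I s) = ∫ s in θ₁..θ₂, I s :=
    intervalIntegral.integral_interval_sub_left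
      (hInt θlow (Set.left_mem_Icc.2 hθ.le) θ₂ h₂)
      (hInt θlow (Set.left_mem_Icc.2 hθ.le) θ₁ h₁)
  have hnonpos : (∫ s in θ₁..θ₂, I s) ≤ 0 := by
    have h0 : (0:ℝ) ≤ ∫ s in θ₁..θ₂, -(I s) := by
      apply intervalIntegral.integral_nonneg h12
      intro u hu
      have huIcc : u ∈ Set.Icc θlow θhigh := ⟨le_trans h₁.1 hu.1, le_trans hu.2 h₂.2⟩
      have hIu : I u ≤ 0 := by
        have h0' : (0:ℝ) ≤ ∫ l in (0:ℝ)..Lbar, -(D u l * r u l) := by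
          apply intervalIntegral.integral_nonneg hL.le
          intro l hl
          have hrl := hr_range u huIcc l hl
          have := hD_nonpos u huIcc l hl
          have : D u l * r u l ≤ 0 :=
            mul_nonpos_iff.2 (Or.inr ⟨this, hrl.1⟩)
          linarith
        rw [intervalIntegral.integral_neg] at h0'
        simpa [hI] using (by linarith : (∫ l in (0:ℝ)..Lbar, D u l * r u l) ≤ 0)
      linarith
    rw [intervalIntegral.integral_neg] at h0
    linarith
  linarith [hsub]
end
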